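/- Backward direction of the reduction: if the constructed job system admits a feasible schedule, then there exists a partition of the index set {1, …, 3n} into n subsets each of which contains exactly 3 elements and satisfies ∑_{i ∈ A_k} x_i = M for every k; that is, the underlying 3-Partition instance is a yes-instance. -/
import Mathlib


/-- Release times of the constructed job system: blocker `k` is released at
`2kM`, every partition job at `0`. -/
noncomputable def rel (n M : ℕ) : Fin n ⊕ Fin (3 * n) → ℝ :=
  Sum.elim (fun k => ((2 * (k : ℕ) * M : ℕ) : ℝ)) (fun _ => 0)

/-- Deadlines of the constructed job system: blocker `k` has deadline
`(2k+1)M`, every partition job has deadline `2nM`. -/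
noncomputable def dl (n M : ℕ) : Fin n ⊕ Fin (3 * n) → ℝ :=
  Sum.elim (fun k => (((2 * (k : ℕ) + 1) * M : ℕ) : ℝ)) (fun _ => ((2 * n * M : ℕ) : ℝ))

/-- Lengths of the constructed job system: every blocker has length `M`,
partition job `i` has length `x i`. -/
noncomputable def len (n M : ℕ) (x : Fin (3 * n) → ℕ) : Fin n ⊕ Fin (3 * n) → ℝ :=
  Sum.elim (fun _ => (M : ℝ)) (fun i => (x i : ℝ))

/-- A schedule (assignment of start times) of the constructed job system is
feasible if every job starts at or after its release time, finishes by its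
deadline, and the execution intervals of distinct jobs are pairwise
disjoint. -/
def Feasible (n M : ℕ) (x : Fin (3 * n) → ℕ)
    (sched : Fin n ⊕ Fin (3 * n) → ℝ) : Prop :=
  (∀ j, rel n M j ≤ sched j) ∧
  (∀ j, sched j + len n M x j ≤ dl n M j) ∧
  (∀ j k, j ≠ k →
    Disjoint (Set.Ico (sched j) (sched j + len n M x j))
             (Set.Ico (sched k) (sched k + len n M x k)))

/-- **Backward direction of the reduction.**
If the constructed job system admits a feasible schedule, then the index set
of the 3-Partition instance can be partitioned into `n` subsets, each having
exactly 3 elements and summing to `M`; i.e., the underlying 3-Partition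
instance is a yes-instance. -/
theorem three_partition_of_feasible
    (n M : ℕ) (hn : 0 < n) (hM : 0 < M)
    (x : Fin (3 * n) → ℕ) (hx : ∀ i, 0 < x i)
    (hlow : ∀ i, M < 4 * x i) (hhigh : ∀ i, 2 * x i < M)
    (hsum : ∑ i, x i = n * M)
    (hfeas : ∃ sched : Fin n ⊕ Fin (3 * n) → ℝ, Feasible n M x sched) :
    ∃ A : Fin n → Finset (Fin (3 * n)),
      (∀ i : Fin (3 * n), ∃! k : Fin n, i ∈ A k) ∧
      (∀ k : Fin n, (A k).card = 3 ∧ ∑ i ∈ A k, x i = M) := by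
  obtain ⟨sched, hrel, hdl, hdisj⟩ := hfeas
  set s : Fin (3 * n) → ℝ := fun i => sched (Sum.inr i) with hsdef
  have hMR : (0:ℝ) < M := by exact_mod_cast hM
  -- blockers start exactly at their release time
  have hblock : ∀ b : Fin n, sched (Sum.inl b) = 2 * (b:ℕ) * M := by
    intro b
    have h1 := hrel (Sum.inl b)
    have h2 := hdl (Sum.inl b)
    simp only [rel, dl, len, Sum.elim_inl] at h1 h2
    push_cast at h1 h2
    linarith
  -- basic job bounds
  have hs0 : ∀ i, 0 ≤ s i := by
    intro i
    have := hrel (Sum.inr i)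
    simpa [rel, hsdef] using this
  have hsd : ∀ i, s i + x i ≤ 2 * n * M := by
    intro i
    have := hdl (Sum.inr i)
    simp only [dl, len, Sum.elim_inr] at this
    push_cast at this
    exact this
  have hxR : ∀ i, (0:ℝ) < x i := fun i => by exact_mod_cast hx i
  -- disjointness of job i from blocker b
  have hjb : ∀ (i : Fin (3*n)) (b : Fin n),
      Disjoint (Set.Ico (s i) (s i + x i))
        (Set.Ico (2 * (b:ℕ) * M : ℝ) (2 * (b:ℕ) * M + M)) := by
    intro i b
    have h := hdisj (Sum.inr i) (Sum.inl b) (by simp)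
    simp only [len, Sum.elim_inl, Sum.elim_inr] at h
    rw [hblock b] at h
    exact h
  -- disjointness among jobs
  have hjj : ∀ (i j : Fin (3*n)), i ≠ j →
      Disjoint (Set.Ico (s i) (s i + x i)) (Set.Ico (s j) (s j + x j)) := by
    intro i j hij
    have h := hdisj (Sum.inr i) (Sum.inr j) (by simp [hij])
    simpa only [len, Sum.elim_inr] using h
  have hM2 : (0:ℝ) < 2 * M := by linarith
  -- the gap index of each job
  have hklt : ∀ i, ⌊s i / (2 * M)⌋₊ < n := by
    intro i
    rw [Nat.floor_lt (div_nonneg (hs0 i) (le_of_lt hM2))]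
    rw [div_lt_iff₀ hM2]
    have h1 := hsd i
    have h2 := hxR i
    nlinarith
  set f : Fin (3 * n) → Fin n := fun i => ⟨⌊s i / (2 * M)⌋₊, hklt i⟩ with hfdef
  -- each job lies in its gap
  have hgap : ∀ i, 2 * ((f i : ℕ) : ℝ) * M + M ≤ s i ∧
      s i + x i ≤ 2 * ((f i : ℕ) : ℝ) * M + 2 * M := by
    intro i
    set k : ℕ := (f i : ℕ) with hk
    have hkdef : k = ⌊s i / (2 * M)⌋₊ := rfl
    have hnn : (0:ℝ) ≤ s i / (2 * M) := div_nonneg (hs0 i) (le_of_lt hM2)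
    have hfl : (k : ℝ) ≤ s i / (2 * M) := by
      rw [hkdef]; exact Nat.floor_le hnn
    have hk1 : (k : ℝ) * (2 * M) ≤ s i := (le_div_iff₀ hM2).1 hfl
    have hfl2 : s i / (2 * M) < (k : ℝ) + 1 := by
      rw [hkdef]
      exact_mod_cast Nat.lt_floor_add_one (s i / (2 * M))
    have hk2 : s i < ((k : ℝ) + 1) * (2 * M) := (div_lt_iff₀ hM2).1 hfl2
    constructor
    · by_contra hcon
      push_neg at hcon
      have hmem1 : s i ∈ Set.Ico (s i) (s i + x i) := ⟨le_refl _, by linarith [hxR i]⟩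
      have hmem2 : s i ∈ Set.Ico (2 * (k:ℝ) * M) (2 * (k:ℝ) * M + M) :=
        ⟨by linarith, by linarith⟩
      exact Set.disjoint_left.1 (hjb i (f i)) hmem1 hmem2
    · have hkn : k + 1 ≤ n := (f i).isLt
      rcases eq_or_lt_of_le hkn with heq | hlt
      · have : s i + x i ≤ 2 * n * M := hsd i
        have hcast : ((k : ℝ) + 1) = (n : ℝ) := by exact_mod_cast congrArg Nat.cast heq
        nlinarith
      · by_contra hcon
        push_neg at hcon
        set b : Fin n := ⟨k + 1, hlt⟩ with hb
        have hbcast : ((b : ℕ) : ℝ) = (k : ℝ) + 1 := by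
          simp [hb]
        have hmem1 : ((k:ℝ) + 1) * (2 * M) ∈ Set.Ico (s i) (s i + x i) :=
          ⟨le_of_lt hk2, by nlinarith⟩
        have hmem2 : ((k:ℝ) + 1) * (2 * M) ∈
            Set.Ico (2 * ((b:ℕ):ℝ) * M) (2 * ((b:ℕ):ℝ) * M + M) := by
          rw [hbcast]
          constructor
          · nlinarith
          · nlinarith
        exact Set.disjoint_left.1 (hjb i b) hmem1 hmem2
  -- the candidate partition
  set A : Fin n → Finset (Fin (3 * n)) :=
    fun k => Finset.univ.filter (fun i => f i = k) with hA
  have hmemA : ∀ i k, i ∈ A k ↔ f i = k := by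
    intro i k; simp [hA]
  -- real sum on each gap is at most M (measure argument)
  have hle : ∀ k : Fin n, (∑ i ∈ A k, (x i : ℝ)) ≤ M := by
    intro k
    set I : Fin (3*n) → Set ℝ := fun i => Set.Ico (s i) (s i + x i) with hI
    have hpd : (↑(A k) : Set (Fin (3*n))).PairwiseDisjoint I := by
      intro i _ j _ hij
      exact hjj i j hij
    have hmeas : ∀ i ∈ A k, MeasurableSet (I i) := fun i _ => measurableSet_Ico
    have hv := MeasureTheory.measure_biUnion_finset (μ := MeasureTheory.volume) hpd hmeas
    have hsub : (⋃ i ∈ A k, I i) ⊆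
        Set.Ico (2 * ((k:ℕ):ℝ) * M + M) (2 * ((k:ℕ):ℝ) * M + 2 * M) := by
      intro y hy
      simp only [Set.mem_iUnion] at hy
      obtain ⟨i, hi, hy⟩ := hy
      have hfi : f i = k := (hmemA i k).1 hi
      obtain ⟨hg1, hg2⟩ := hgap i
      rw [hfi] at hg1 hg2
      obtain ⟨hy1, hy2⟩ := hy
      exact ⟨by linarith, by linarith⟩
    have hmono := MeasureTheory.measure_mono (μ := MeasureTheory.volume) hsub
    rw [hv] at hmono
    rw [Real.volume_Ico] at hmono
    have hterm : ∀ i ∈ A k, MeasureTheory.volume (I i) = ENNReal.ofReal (x i) := by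
      intro i _
      rw [hI]
      simp only [Real.volume_Ico]
      congr 1
      ring
    rw [Finset.sum_congr rfl hterm] at hmono
    rw [← ENNReal.ofReal_sum_of_nonneg (fun i _ => (x i).cast_nonneg)] at hmono
    have : (2 * ((k:ℕ):ℝ) * M + 2 * M) - (2 * ((k:ℕ):ℝ) * M + M) = M := by ring
    rw [this] at hmono
    exact (ENNReal.ofReal_le_ofReal_iff (le_of_lt hMR)).1 hmono
  -- natural number version
  have hleN : ∀ k : Fin n, (∑ i ∈ A k, x i) ≤ M := by
    intro k
    have := hle k
    rw [← Nat.cast_sum] at this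
    exact_mod_cast this
  -- total sum
  have htot : ∑ k : Fin n, ∑ i ∈ A k, x i = n * M := by
    rw [hA]
    rw [Finset.sum_fiberwise_of_maps_to (fun i _ => Finset.mem_univ (f i))]
    exact hsum
  -- each sum equals M
  have heq : ∀ k : Fin n, ∑ i ∈ A k, x i = M := by
    by_contra h
    push_neg at h
    obtain ⟨k0, hk0⟩ := h
    have hlt : ∑ i ∈ A k0, x i < M := lt_of_le_of_ne (hleN k0) hk0
    have : ∑ k : Fin n, ∑ i ∈ A k, x i < ∑ _k : Fin n, M :=
      Finset.sum_lt_sum (fun k _ => hleN k) ⟨k0, Finset.mem_univ _, hlt⟩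
    rw [htot] at this
    simp [Finset.card_univ] at this
  -- cardinality
  refine ⟨A, ?_, ?_⟩
  · intro i
    refine ⟨f i, (hmemA i (f i)).2 rfl, ?_⟩
    intro k hk
    exact ((hmemA i k).1 hk).symm
  · intro k
    refine ⟨?_, heq k⟩
    have hsk := heq k
    have h1 : (A k).card * (M + 1) ≤ 4 * M := by
      calc (A k).card * (M + 1) = ∑ _i ∈ A k, (M + 1) := by
            rw [Finset.sum_const, smul_eq_mul]
        _ ≤ ∑ i ∈ A k, 4 * x i := Finset.sum_le_sum (fun i _ => hlow i)
        _ = 4 * M := by rw [← Finset.mul_sum, hsk]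
    have h2 : 2 * M ≤ (A k).card * (M - 1) := by
      calc 2 * M = ∑ i ∈ A k, 2 * x i := by rw [← Finset.mul_sum, hsk]
        _ ≤ ∑ _i ∈ A k, (M - 1) := Finset.sum_le_sum (fun i _ => by
            have := hhigh i; omega)
        _ = (A k).card * (M - 1) := by rw [Finset.sum_const, smul_eq_mul]
    have hM3 : 3 ≤ M := by
      have i0 : Fin (3 * n) := ⟨0, by omega⟩
      have := hlow i0; have := hhigh i0; omega
    have hc4 : (A k).card < 4 := by
      by_contra hc
      push_neg at hc
      have : 4 * (M + 1) ≤ (A k).card * (M + 1) := Nat.mul_le_mul_right _ hc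
      omega
    have hc3 : 3 ≤ (A k).card := by
      by_contra hc
      push_neg at hc
      have : (A k).card * (M - 1) ≤ 2 * (M - 1) :=
        Nat.mul_le_mul_right _ (by omega)
      omega
    omega
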